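/- Let H_X and H_Y be real Hilbert spaces, w_1, …, w_n ∈ H_X with Gram matrix k (k_{ij} = ⟨w_i, w_j⟩), u_1, …, u_n ∈ H_Y with Gram matrix L (L_{ij} = ⟨u_i, u_j⟩), and ε > 0. Let D := Ĉ_YY − Ĉ_YX ∘ (Ĉ_XX + ε·Id)^{-1} ∘ Ĉ_XY be the regularized empirical conditional covariance operator on H_Y. Then for every φ ∈ H_Y, writing b ∈ ℝ^n for the vector with b_p = ⟨u_p, φ⟩, one has D φ = (1/n) Σ_{p=1}^n (b − (k + nε·I_n)^{-1} k b)_p u_p. In particular, ⟨u_i, D u_j⟩ = (1/n) (L T)_{ij} where T := L − (k + nε·I_n)^{-1} k L. -/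

import Mathlib

open scoped RealInnerProductSpace BigOperators

/-- Gram matrix expression of the regularized empirical conditional
covariance operator `D = Ĉ_YY − Ĉ_YX ∘ (Ĉ_XX + ε Id)⁻¹ ∘ Ĉ_XY`:
for every `φ`, with `b = (⟪uₚ, φ⟫)ₚ`,
`D φ = (1/n) Σₚ (b − (k + nε Iₙ)⁻¹ k b)ₚ uₚ`, and in particular
`⟪uᵢ, D uⱼ⟫ = (1/n) (L T)ᵢⱼ` where `T = L − (k + nε Iₙ)⁻¹ k L`. -/
theorem conditional_covariance_gram_expression
    {HX HY : Type*} [NormedAddCommGroup HX] [InnerProductSpace ℝ HX]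
    [NormedAddCommGroup HY] [InnerProductSpace ℝ HY]
    (n : ℕ) (hn : 0 < n) (w : Fin n → HX) (u : Fin n → HY)
    (k : Matrix (Fin n) (Fin n) ℝ) (hk : ∀ i j, k i j = ⟪w i, w j⟫)
    (L : Matrix (Fin n) (Fin n) ℝ) (hL : ∀ i j, L i j = ⟪u i, u j⟫)
    (ε : ℝ) (hε : 0 < ε)
    -- `R` is the inverse of the regularized covariance operator `Ĉ_XX + ε Id`:
    (R : HX → HX)
    (hR1 : ∀ φ : HX, ((1 / (n : ℝ)) • ∑ p, ⟪w p, R φ⟫ • w p) + ε • R φ = φ)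
    (hR2 : ∀ φ : HX, R (((1 / (n : ℝ)) • ∑ p, ⟪w p, φ⟫ • w p) + ε • φ) = φ)
    -- `D = Ĉ_YY − Ĉ_YX ∘ R ∘ Ĉ_XY`:
    (D : HY → HY)
    (hD : ∀ φ : HY,
      D φ = (1 / (n : ℝ)) • ∑ p, ⟪u p, φ⟫ • u p
        - (1 / (n : ℝ)) •
            ∑ p, ⟪w p, R ((1 / (n : ℝ)) • ∑ q, ⟪u q, φ⟫ • w q)⟫ • u p) :
    (∀ φ : HY,
      D φ = (1 / (n : ℝ)) •
        ∑ p, (((fun q => ⟪u q, φ⟫)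
          - (k + ((n : ℝ) * ε) • 1)⁻¹.mulVec (k.mulVec fun q => ⟪u q, φ⟫)) p) • u p) ∧
    ∀ i j, ⟪u i, D (u j)⟫
      = (1 / (n : ℝ)) * (L * (L - (k + ((n : ℝ) * ε) • 1)⁻¹ * k * L)) i j := by
  have hn' : (n : ℝ) ≠ 0 := Nat.cast_ne_zero.mpr hn.ne'
  set M : Matrix (Fin n) (Fin n) ℝ := k + ((n : ℝ) * ε) • 1 with hM
  -- invertibility of M
  have hquad : ∀ v : Fin n → ℝ,
      dotProduct v (k.mulVec v) = ⟪∑ i, v i • w i, ∑ j, v j • w j⟫ := by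
    intro v
    simp [dotProduct, Matrix.mulVec, hk, sum_inner, inner_sum,
      real_inner_smul_left, real_inner_smul_right, Finset.mul_sum, mul_assoc, -inner_self_eq_norm_sq_to_K]
    rw [Finset.sum_comm]
    exact Finset.sum_congr rfl fun i _ => Finset.sum_congr rfl fun j _ => by ring
  have hdet : IsUnit M.det := by
    rw [isUnit_iff_ne_zero]
    intro h0
    obtain ⟨v, hv, hMv⟩ := Matrix.exists_mulVec_eq_zero_iff.mpr h0
    have h1 : dotProduct v (M.mulVec v) = 0 := by rw [hMv]; simp
    have h2 : dotProduct v (M.mulVec v)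
        = dotProduct v (k.mulVec v) + ((n:ℝ)*ε) * dotProduct v v := by
      simp [hM, Matrix.add_mulVec, Matrix.smul_mulVec, Matrix.one_mulVec,
        dotProduct_add, dotProduct_smul, smul_eq_mul]
    have h3 : 0 ≤ dotProduct v (k.mulVec v) := by
      rw [hquad v]; exact real_inner_self_nonneg
    have h4 : 0 < dotProduct v v := by
      obtain ⟨i, hi⟩ := Function.ne_iff.mp hv
      have : dotProduct v v = ∑ j, v j ^ 2 := by simp [dotProduct, sq]
      rw [this]
      exact Finset.sum_pos' (fun j _ => sq_nonneg _)
        ⟨i, Finset.mem_univ i, pow_two_pos_of_ne_zero hi⟩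
    have h5 : 0 < (n:ℝ)*ε := by positivity
    nlinarith
  -- key identity
  have key : ∀ b : Fin n → ℝ,
      (fun p => (⟪w p, R ((1 / (n : ℝ)) • ∑ q, b q • w q)⟫ : ℝ))
        = M⁻¹.mulVec (k.mulVec b) := by
    intro b
    set ψ := (1 / (n : ℝ)) • ∑ q, b q • w q with hψ
    have hMc : M.mulVec (fun p => (⟪w p, R ψ⟫ : ℝ)) = k.mulVec b := by
      funext i
      have h := congrArg (fun z => (⟪w i, z⟫ : ℝ)) (hR1 ψ)
      simp only [inner_add_right, real_inner_smul_right, inner_sum] at h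
      have hψi : (⟪w i, ψ⟫ : ℝ) = (1 / (n : ℝ)) * ∑ q, b q * ⟪w i, w q⟫ := by
        rw [hψ]; simp [real_inner_smul_right, inner_sum]
      rw [hψi] at h
      field_simp at h
      simp only [hM, Matrix.add_mulVec, Matrix.smul_mulVec, Matrix.one_mulVec,
        Pi.add_apply, Pi.smul_apply, smul_eq_mul]
      simp only [Matrix.mulVec, dotProduct, hk]
      have e1 : ∑ p, (⟪w i, w p⟫ : ℝ) * ⟪w p, R ψ⟫
          = ∑ p, (⟪w p, R ψ⟫ : ℝ) * ⟪w i, w p⟫ :=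
        Finset.sum_congr rfl fun p _ => mul_comm _ _
      have e2 : ∑ p, (⟪w i, w p⟫ : ℝ) * b p = ∑ p, b p * ⟪w i, w p⟫ :=
        Finset.sum_congr rfl fun p _ => mul_comm _ _
      rw [e1, e2]
      linear_combination h
    calc (fun p => (⟪w p, R ψ⟫ : ℝ))
        = M⁻¹.mulVec (M.mulVec (fun p => (⟪w p, R ψ⟫ : ℝ))) := by
            rw [Matrix.mulVec_mulVec, Matrix.nonsing_inv_mul M hdet, Matrix.one_mulVec]
      _ = M⁻¹.mulVec (k.mulVec b) := by rw [hMc]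
  have part1 : ∀ φ : HY,
      D φ = (1 / (n : ℝ)) •
        ∑ p, (((fun q => ⟪u q, φ⟫)
          - M⁻¹.mulVec (k.mulVec fun q => ⟪u q, φ⟫)) p) • u p := by
    intro φ
    have this1 : ∀ p, (((fun q => (⟪u q, φ⟫ : ℝ))
        - M⁻¹.mulVec (k.mulVec fun q => ⟪u q, φ⟫)) p) • u p
        = ⟪u p, φ⟫ • u p
          - ⟪w p, R ((1 / (n : ℝ)) • ∑ q, ⟪u q, φ⟫ • w q)⟫ • u p := fun p => by
      rw [Pi.sub_apply, sub_smul, ← congrFun (key fun q => ⟪u q, φ⟫) p]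
    rw [hD φ, ← smul_sub, ← Finset.sum_sub_distrib]
    exact congrArg (fun s => (1/(n:ℝ)) • s)
      (Finset.sum_congr rfl fun p _ => (this1 p).symm)
  refine ⟨part1, fun i j => ?_⟩
  rw [part1 (u j), real_inner_smul_right, inner_sum]
  simp only [real_inner_smul_right]
  congr 1
  rw [Matrix.mul_apply]
  have hbL : (fun q => (⟪u q, u j⟫ : ℝ)) = fun q => L q j := funext fun q => (hL q j).symm
  apply Finset.sum_congr rfl
  intro p _
  have hgb : (M⁻¹.mulVec (k.mulVec fun q => (⟪u q, u j⟫ : ℝ))) p = (M⁻¹ * k * L) p j := by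
    rw [hbL, Matrix.mulVec_mulVec]
    simp [Matrix.mulVec, dotProduct, Matrix.mul_apply]
  rw [Pi.sub_apply, hgb, Matrix.sub_apply, ← hL i p, ← hL p j]
  ring
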